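/- arXiv:math/0601493 — 2 statements merged into one kernel-verified Lean document; each statement's English description precedes it below -/
import Mathlib

section
/- Each of the six tetrahedra T21 = {V20,V21,V23,V24}, T22 = {V21,V23,V24,V25}, T23 = {V20,V22,V23,V24}, T24 = {V22,V23,V24,V26}, T25 = {V23,V24,V25,V27}, T26 = {V23,V24,V26,V27} is taken by an integer affine unimodular transformation to the unit basis tetrahedron: for each of these tetrahedra, listed with vertices (P0,P1,P2,P3), there exist a 4×4 integer matrix M with determinant ±1 and an integer vector v ∈ ℤ^4 such that M·P0 + v = 0, M·P1 + v = e1, M·P2 + v = e2, and M·P3 + v = e3, where e1, e2, e3 are the first three standard basis vectors of ℤ^4. -/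
open Matrix Polynomial

def A2 : Matrix (Fin 4) (Fin 4) ℚ :=
  !![0, 1, 0, 0; 0, 0, 1, 0; 0, 0, 0, 1; 1, -4, 1, 4]

noncomputable def B21 : Matrix (Fin 4) (Fin 4) ℚ := (A2 ^ 2)⁻¹
noncomputable def B22 : Matrix (Fin 4) (Fin 4) ℚ := (A2 - 1) ^ 2 * (A2 ^ 2)⁻¹
noncomputable def B23 : Matrix (Fin 4) (Fin 4) ℚ := (A2 + 1) * A2⁻¹

def V20 : Fin 4 → ℚ := ![-4, -3, -2, 0]

/-- `V i j k` is the point `B21^i * B22^j * B23^k` applied to `V20`;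
the paper's vertex `V_{2,4i+2j+k}`. -/
noncomputable def V (i j k : ℕ) : Fin 4 → ℚ := (B21 ^ i * B22 ^ j * B23 ^ k).mulVec V20

def stdQ (m : Fin 4) : Fin 4 → ℚ := fun i => if i = m then 1 else 0

/-- The tetrahedron with ordered vertices `P0 P1 P2 P3` is taken by an integer affine
unimodular transformation to the unit basis tetrahedron. -/
def UnimodularToUnitTetra (P0 P1 P2 P3 : Fin 4 → ℚ) : Prop :=
  ∃ (M : Matrix (Fin 4) (Fin 4) ℤ) (v : Fin 4 → ℤ),
    (M.det = 1 ∨ M.det = -1) ∧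
    (M.map (Int.cast : ℤ → ℚ)).mulVec P0 + (fun i => (v i : ℚ)) = 0 ∧
    (M.map (Int.cast : ℤ → ℚ)).mulVec P1 + (fun i => (v i : ℚ)) = stdQ 0 ∧
    (M.map (Int.cast : ℤ → ℚ)).mulVec P2 + (fun i => (v i : ℚ)) = stdQ 1 ∧
    (M.map (Int.cast : ℤ → ℚ)).mulVec P3 + (fun i => (v i : ℚ)) = stdQ 2

def C2 : Matrix (Fin 4) (Fin 4) ℚ := !![4, -1, -4, 1; 1, 0, 0, 0; 0, 1, 0, 0; 0, 0, 1, 0]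

lemma hC2 : A2 * C2 = 1 := by
  ext i j
  fin_cases i <;> fin_cases j <;>
    simp [A2, C2, Matrix.mul_apply, Fin.sum_univ_four, Matrix.one_apply, Matrix.vecHead, Matrix.vecTail] <;> norm_num

lemma hA2inv : A2⁻¹ = C2 := inv_eq_right_inv hC2

lemma hA2sqinv : (A2 ^ 2)⁻¹ = C2 * C2 := by
  apply inv_eq_right_inv
  rw [pow_two, Matrix.mul_assoc, ← Matrix.mul_assoc A2 C2, hC2, Matrix.one_mul, hC2]

lemma hB21 : B21 = !![15, -8, -15, 4; 4, -1, -4, 1; 1, 0, 0, 0; 0, 1, 0, 0] := by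
  rw [B21, hA2sqinv]
  ext i j
  fin_cases i <;> fin_cases j <;>
    simp [C2, Matrix.mul_apply, Fin.sum_univ_four, Matrix.vecHead, Matrix.vecTail] <;> norm_num

lemma hAm : A2 - 1 = !![-1, 1, 0, 0; 0, -1, 1, 0; 0, 0, -1, 1; 1, -4, 1, 3] := by
  ext i j
  fin_cases i <;> fin_cases j <;>
    simp [A2, Matrix.sub_apply, Matrix.one_apply, Matrix.vecHead, Matrix.vecTail] <;> norm_num

lemma hAp : A2 + 1 = !![1, 1, 0, 0; 0, 1, 1, 0; 0, 0, 1, 1; 1, -4, 1, 5] := by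
  ext i j
  fin_cases i <;> fin_cases j <;>
    simp [A2, Matrix.add_apply, Matrix.one_apply, Matrix.vecHead, Matrix.vecTail] <;> norm_num

lemma hAmsq : (A2 - 1) ^ 2 = !![1, -2, 1, 0; 0, 1, -2, 1; 1, -4, 2, 2; 2, -7, -2, 10] := by
  rw [pow_two, hAm]
  ext i j
  fin_cases i <;> fin_cases j <;>
    simp [Matrix.mul_apply, Fin.sum_univ_four, Matrix.vecHead, Matrix.vecTail] <;> norm_num

lemma hB22 : B22 = !![8, -6, -7, 2; 2, 0, -4, 1; 1, -2, 1, 0; 0, 1, -2, 1] := by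
  rw [B22, hA2sqinv, hAmsq]
  have hCC : C2 * C2 = !![15, -8, -15, 4; 4, -1, -4, 1; 1, 0, 0, 0; 0, 1, 0, 0] := by
    ext i j
    fin_cases i <;> fin_cases j <;>
      simp [C2, Matrix.mul_apply, Fin.sum_univ_four, Matrix.vecHead, Matrix.vecTail] <;> norm_num
  rw [hCC]
  ext i j
  fin_cases i <;> fin_cases j <;>
    simp [Matrix.mul_apply, Fin.sum_univ_four, Matrix.vecHead, Matrix.vecTail] <;> norm_num

lemma hB23 : B23 = !![5, -1, -4, 1; 1, 1, 0, 0; 0, 1, 1, 0; 0, 0, 1, 1] := by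
  rw [B23, hA2inv, hAp]
  ext i j
  fin_cases i <;> fin_cases j <;>
    simp [C2, Matrix.mul_apply, Fin.sum_univ_four, Matrix.vecHead, Matrix.vecTail] <;> norm_num

lemma hV000 : V 0 0 0 = ![-4, -3, -2, 0] := by
  rw [V, hB21, hB22, hB23]
  ext i
  fin_cases i <;>
    simp [Matrix.mulVec, Matrix.mul_apply, dotProduct, Fin.sum_univ_four, V20,
      pow_succ, pow_zero, Matrix.one_mul, Matrix.mul_one, Matrix.vecHead, Matrix.vecTail] <;> norm_num

lemma hV001 : V 0 0 1 = ![-9, -7, -5, -2] := by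
  rw [V, hB21, hB22, hB23]
  ext i
  fin_cases i <;>
    simp [Matrix.mulVec, Matrix.mul_apply, dotProduct, Fin.sum_univ_four, V20,
      pow_succ, pow_zero, Matrix.one_mul, Matrix.mul_one, Matrix.vecHead, Matrix.vecTail] <;> norm_num

lemma hV010 : V 0 1 0 = ![0, 0, 0, 1] := by
  rw [V, hB21, hB22, hB23]
  ext i
  fin_cases i <;>
    simp [Matrix.mulVec, Matrix.mul_apply, dotProduct, Fin.sum_univ_four, V20,
      pow_succ, pow_zero, Matrix.one_mul, Matrix.mul_one, Matrix.vecHead, Matrix.vecTail] <;> norm_num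

lemma hV011 : V 0 1 1 = ![1, 0, 0, 1] := by
  rw [V, hB21, hB22, hB23]
  ext i
  fin_cases i <;>
    simp [Matrix.mulVec, Matrix.mul_apply, dotProduct, Fin.sum_univ_four, V20,
      pow_succ, pow_zero, Matrix.one_mul, Matrix.mul_one, Matrix.vecHead, Matrix.vecTail] <;> norm_num

lemma hV100 : V 1 0 0 = ![-6, -5, -4, -3] := by
  rw [V, hB21, hB22, hB23]
  ext i
  fin_cases i <;>
    simp [Matrix.mulVec, Matrix.mul_apply, dotProduct, Fin.sum_univ_four, V20,
      pow_succ, pow_zero, Matrix.one_mul, Matrix.mul_one, Matrix.vecHead, Matrix.vecTail] <;> norm_num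

lemma hV101 : V 1 0 1 = ![-12, -11, -9, -7] := by
  rw [V, hB21, hB22, hB23]
  ext i
  fin_cases i <;>
    simp [Matrix.mulVec, Matrix.mul_apply, dotProduct, Fin.sum_univ_four, V20,
      pow_succ, pow_zero, Matrix.one_mul, Matrix.mul_one, Matrix.vecHead, Matrix.vecTail] <;> norm_num

lemma hV110 : V 1 1 0 = ![4, 1, 0, 0] := by
  rw [V, hB21, hB22, hB23]
  ext i
  fin_cases i <;>
    simp [Matrix.mulVec, Matrix.mul_apply, dotProduct, Fin.sum_univ_four, V20,
      pow_succ, pow_zero, Matrix.one_mul, Matrix.mul_one, Matrix.vecHead, Matrix.vecTail] <;> norm_num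

lemma hV111 : V 1 1 1 = ![19, 5, 1, 0] := by
  rw [V, hB21, hB22, hB23]
  ext i
  fin_cases i <;>
    simp [Matrix.mulVec, Matrix.mul_apply, dotProduct, Fin.sum_univ_four, V20,
      pow_succ, pow_zero, Matrix.one_mul, Matrix.mul_one, Matrix.vecHead, Matrix.vecTail] <;> norm_num

set_option maxHeartbeats 1600000 in
theorem statement13 :
    UnimodularToUnitTetra (V 0 0 0) (V 0 0 1) (V 0 1 1) (V 1 0 0) ∧
    UnimodularToUnitTetra (V 0 0 1) (V 0 1 1) (V 1 0 0) (V 1 0 1) ∧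
    UnimodularToUnitTetra (V 0 0 0) (V 0 1 0) (V 0 1 1) (V 1 0 0) ∧
    UnimodularToUnitTetra (V 0 1 0) (V 0 1 1) (V 1 0 0) (V 1 1 0) ∧
    UnimodularToUnitTetra (V 0 1 1) (V 1 0 0) (V 1 0 1) (V 1 1 1) ∧
    UnimodularToUnitTetra (V 0 1 1) (V 1 0 0) (V 1 1 0) (V 1 1 1) := by
  refine ⟨?_, ?_, ?_, ?_, ?_, ?_⟩
  · rw [hV000, hV001, hV011, hV100]
    refine ⟨!![-1, 11, -16, 4; 0, 5, -8, 2; 1, -8, 11, -3; 1, -7, 9, -2], ![-3, -1, 2, 1], Or.inl (by decide), ?_, ?_, ?_, ?_⟩ <;>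
      (ext i; fin_cases i <;>
        simp [Matrix.mulVec, dotProduct, Fin.sum_univ_four, Matrix.map_apply,
          stdQ, Pi.add_apply, Matrix.vecHead, Matrix.vecTail] <;> norm_num)
  · rw [hV001, hV011, hV100, hV101]
    refine ⟨!![-3, 18, -22, 5; 6, -35, 43, -10; -1, 7, -9, 2; -5, 27, -32, 7], ![-1, 4, -1, -2], Or.inr (by decide), ?_, ?_, ?_, ?_⟩ <;>
      (ext i; fin_cases i <;>
        simp [Matrix.mulVec, dotProduct, Fin.sum_univ_four, Matrix.map_apply,
          stdQ, Pi.add_apply, Matrix.vecHead, Matrix.vecTail] <;> norm_num)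
  · rw [hV000, hV010, hV011, hV100]
    refine ⟨!![-1, -5, 12, -4; 1, 2, -6, 2; 0, -1, 2, -1; 0, -4, 7, -2], ![5, -2, 1, 2], Or.inr (by decide), ?_, ?_, ?_, ?_⟩ <;>
      (ext i; fin_cases i <;>
        simp [Matrix.mulVec, dotProduct, Fin.sum_univ_four, Matrix.map_apply,
          stdQ, Pi.add_apply, Matrix.vecHead, Matrix.vecTail] <;> norm_num)
  · rw [hV010, hV011, hV100, hV110]
    refine ⟨!![1, -14, 26, -10; 0, -1, 2, -1; 0, 4, -8, 3; 0, 4, -9, 4], ![10, 1, -3, -4], Or.inl (by decide), ?_, ?_, ?_, ?_⟩ <;>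
      (ext i; fin_cases i <;>
        simp [Matrix.mulVec, dotProduct, Fin.sum_univ_four, Matrix.map_apply,
          stdQ, Pi.add_apply, Matrix.vecHead, Matrix.vecTail] <;> norm_num)
  · rw [hV011, hV100, hV101, hV111]
    refine ⟨!![34, -175, 211, -52; -13, 67, -81, 20; 2, -10, 12, -3; -17, 87, -104, 25], ![18, -7, 1, -8], Or.inr (by decide), ?_, ?_, ?_, ?_⟩ <;>
      (ext i; fin_cases i <;>
        simp [Matrix.mulVec, dotProduct, Fin.sum_univ_four, Matrix.map_apply,
          stdQ, Pi.add_apply, Matrix.vecHead, Matrix.vecTail] <;> norm_num)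
  · rw [hV011, hV100, hV110, hV111]
    refine ⟨!![-1, 6, -9, 3; 22, -130, 189, -65; -4, 24, -35, 12; 7, -41, 59, -20], ![-2, 43, -8, 13], Or.inr (by decide), ?_, ?_, ?_, ?_⟩ <;>
      (ext i; fin_cases i <;>
        simp [Matrix.mulVec, dotProduct, Fin.sum_univ_four, Matrix.map_apply,
          stdQ, Pi.add_apply, Matrix.vecHead, Matrix.vecTail] <;> norm_num)
end

section
/- The integer distances from the origin to the planes spanned by the tetrahedra T21, T22, T23, T24, T25, T26 equal 1, 2, 2, 4, 8, 13 respectively: for each tetrahedron T2m with corresponding value d_m in (1,2,2,4,8,13), there exists an integer linear functional f on ℤ^4, given by a coefficient vector in ℤ^4 whose entries have greatest common divisor 1, such that f(P) = d_m for every vertex P of T2m. -/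
open Matrix Polynomial

/-- The plane through `P0 P1 P2 P3` lies at integer distance `d` from the origin:
there is a primitive integer linear functional taking value `d` at all four points. -/
def AtIntegerDistance (d : ℤ) (P0 P1 P2 P3 : Fin 4 → ℚ) : Prop :=
  ∃ f : Fin 4 → ℤ, Finset.univ.gcd f = 1 ∧
    (∑ i, (f i : ℚ) * P0 i = (d : ℚ)) ∧
    (∑ i, (f i : ℚ) * P1 i = (d : ℚ)) ∧
    (∑ i, (f i : ℚ) * P2 i = (d : ℚ)) ∧
    (∑ i, (f i : ℚ) * P3 i = (d : ℚ))


def C21 : Matrix (Fin 4) (Fin 4) ℚ := !![15, -8, -15, 4; 4, -1, -4, 1; 1, 0, 0, 0; 0, 1, 0, 0]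
def C22 : Matrix (Fin 4) (Fin 4) ℚ := !![8, -6, -7, 2; 2, 0, -4, 1; 1, -2, 1, 0; 0, 1, -2, 1]
def C23 : Matrix (Fin 4) (Fin 4) ℚ := !![5, -1, -4, 1; 1, 1, 0, 0; 0, 1, 1, 0; 0, 0, 1, 1]

lemma A2sq : A2 ^ 2 = !![0, 0, 1, 0; 0, 0, 0, 1; 1, -4, 1, 4; 4, -15, 0, 17] := by
  rw [pow_two]
  ext i j
  fin_cases i <;> fin_cases j <;>
    simp [A2, Matrix.mul_apply, Fin.sum_univ_four] <;> norm_num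

lemma hB21_s14 : B21 = C21 := by
  rw [B21, A2sq]
  apply Matrix.inv_eq_right_inv
  ext i j
  fin_cases i <;> fin_cases j <;>
    simp [C21, Matrix.mul_apply, Fin.sum_univ_four, Matrix.one_apply, Matrix.vecHead, Matrix.vecTail] <;> norm_num

lemma hA2inv_s14 : A2⁻¹ = !![0, 0, 0, 0; 1, 0, 0, 0; 0, 1, 0, 0; 0, 0, 1, 0] + !![4, -1, -4, 1; 0, 0, 0, 0; 0, 0, 0, 0; 0, 0, 0, 0] := by
  apply Matrix.inv_eq_right_inv
  ext i j
  fin_cases i <;> fin_cases j <;>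
    simp [A2, Matrix.mul_apply, Fin.sum_univ_four, Matrix.one_apply, Matrix.vecHead, Matrix.vecTail] <;> norm_num

lemma hB22_s14 : B22 = C22 := by
  rw [B22, A2sq]
  rw [show ((!![0, 0, 1, 0; 0, 0, 0, 1; 1, -4, 1, 4; 4, -15, 0, 17] : Matrix (Fin 4) (Fin 4) ℚ))⁻¹ = C21 from ?_]
  · ext i j
    fin_cases i <;> fin_cases j <;>
      simp [A2, C21, C22, pow_two, Matrix.mul_apply, Fin.sum_univ_four, Matrix.sub_apply, Matrix.one_apply, Matrix.vecHead, Matrix.vecTail] <;> norm_num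
  · apply Matrix.inv_eq_right_inv
    ext i j
    fin_cases i <;> fin_cases j <;>
      simp [C21, Matrix.mul_apply, Fin.sum_univ_four, Matrix.one_apply, Matrix.vecHead, Matrix.vecTail] <;> norm_num

lemma hB23_s14 : B23 = C23 := by
  rw [B23, hA2inv_s14]
  ext i j
  fin_cases i <;> fin_cases j <;>
    simp [A2, C23, Matrix.mul_apply, Fin.sum_univ_four, Matrix.add_apply, Matrix.one_apply, Matrix.vecHead, Matrix.vecTail] <;> norm_num

theorem statement14 :
    AtIntegerDistance 1 (V 0 0 0) (V 0 0 1) (V 0 1 1) (V 1 0 0) ∧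
    AtIntegerDistance 2 (V 0 0 1) (V 0 1 1) (V 1 0 0) (V 1 0 1) ∧
    AtIntegerDistance 2 (V 0 0 0) (V 0 1 0) (V 0 1 1) (V 1 0 0) ∧
    AtIntegerDistance 4 (V 0 1 0) (V 0 1 1) (V 1 0 0) (V 1 1 0) ∧
    AtIntegerDistance 8 (V 0 1 1) (V 1 0 0) (V 1 0 1) (V 1 1 1) ∧
    AtIntegerDistance 13 (V 0 1 1) (V 1 0 0) (V 1 1 0) (V 1 1 1) := by
  refine ⟨?_, ?_, ?_, ?_, ?_, ?_⟩
  · refine ⟨![-1, 7, -9, 2], by decide, ?_, ?_, ?_, ?_⟩ <;>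
      · simp only [hV000, hV001, hV010, hV011, hV100, hV101, hV110, hV111, Fin.sum_univ_four]; norm_num [Matrix.cons_val_two, Matrix.cons_val_three, Matrix.vecHead, Matrix.vecTail]
  · refine ⟨![-5, 27, -32, 7], by decide, ?_, ?_, ?_, ?_⟩ <;>
      · simp only [hV000, hV001, hV010, hV011, hV100, hV101, hV110, hV111, Fin.sum_univ_four]; norm_num [Matrix.cons_val_two, Matrix.cons_val_three, Matrix.vecHead, Matrix.vecTail]
  · refine ⟨![0, 4, -7, 2], by decide, ?_, ?_, ?_, ?_⟩ <;>
      · simp only [hV000, hV001, hV010, hV011, hV100, hV101, hV110, hV111, Fin.sum_univ_four]; norm_num [Matrix.cons_val_two, Matrix.cons_val_three, Matrix.vecHead, Matrix.vecTail]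
  · refine ⟨![0, 4, -9, 4], by decide, ?_, ?_, ?_, ?_⟩ <;>
      · simp only [hV000, hV001, hV010, hV011, hV100, hV101, hV110, hV111, Fin.sum_univ_four]; norm_num [Matrix.cons_val_two, Matrix.cons_val_three, Matrix.vecHead, Matrix.vecTail]
  · refine ⟨![-17, 87, -104, 25], by decide, ?_, ?_, ?_, ?_⟩ <;>
      · simp only [hV000, hV001, hV010, hV011, hV100, hV101, hV110, hV111, Fin.sum_univ_four]; norm_num [Matrix.cons_val_two, Matrix.cons_val_three, Matrix.vecHead, Matrix.vecTail]
  · refine ⟨![-7, 41, -59, 20], by decide, ?_, ?_, ?_, ?_⟩ <;>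
      · simp only [hV000, hV001, hV010, hV011, hV100, hV101, hV110, hV111, Fin.sum_univ_four]; norm_num [Matrix.cons_val_two, Matrix.cons_val_three, Matrix.vecHead, Matrix.vecTail]
end
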